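/- Let C be an n × n complex matrix such that 1 − Cᴴ C is positive semidefinite (hence 1 − C Cᴴ is also positive semidefinite). Let W be the 2n × 2n block matrix W = fromBlocks C ((1 − C Cᴴ)^{1/2}) ((1 − Cᴴ C)^{1/2}) (−Cᴴ), i.e., W = [[C, (1 − C Cᴴ)^{1/2}], [(1 − Cᴴ C)^{1/2}, −Cᴴ]]. Then W is unitary: Wᴴ * W = 1 and W * Wᴴ = 1. -/

import Mathlib

open Matrix Polynomial
open scoped ComplexOrder

namespace Matrix.PosSemidef

/-- The positive semidefinite square root of a positive semidefinite matrix
(the definition Mathlib had in December 2024, since removed). -/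
noncomputable def sqrt {n : Type*} [Fintype n] [DecidableEq n] {𝕜 : Type*} [RCLike 𝕜]
    {A : Matrix n n 𝕜} (hA : A.PosSemidef) : Matrix n n 𝕜 :=
  hA.1.eigenvectorUnitary.1 * diagonal ((↑) ∘ (√·) ∘ hA.1.eigenvalues) *
  (star hA.1.eigenvectorUnitary : Matrix n n 𝕜)

lemma posSemidef_sqrt {n : Type*} [Fintype n] [DecidableEq n] {𝕜 : Type*} [RCLike 𝕜]
    {A : Matrix n n 𝕜} (hA : A.PosSemidef) : hA.sqrt.PosSemidef := by
  unfold Matrix.PosSemidef.sqrt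
  have h : (star hA.1.eigenvectorUnitary : Matrix n n 𝕜) = (hA.1.eigenvectorUnitary.1)ᴴ := by
    exact Matrix.star_eq_conjTranspose _
  rw [h]
  apply PosSemidef.mul_mul_conjTranspose_same
  apply PosSemidef.diagonal
  intro i
  simp only [Pi.zero_apply, Function.comp_apply]
  exact RCLike.ofReal_nonneg.mpr (Real.sqrt_nonneg _)

lemma sqrt_mul_self {n : Type*} [Fintype n] [DecidableEq n] {𝕜 : Type*} [RCLike 𝕜]
    {A : Matrix n n 𝕜} (hA : A.PosSemidef) : hA.sqrt * hA.sqrt = A := by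
  unfold Matrix.PosSemidef.sqrt
  conv_rhs => rw [hA.1.spectral_theorem, Unitary.conjStarAlgAut_apply]
  have hU : (star hA.1.eigenvectorUnitary : Matrix n n 𝕜) * hA.1.eigenvectorUnitary.1 = 1 :=
    (Matrix.mem_unitaryGroup_iff').mp hA.1.eigenvectorUnitary.2
  simp only [Matrix.mul_assoc]
  rw [← Matrix.mul_assoc (star hA.1.eigenvectorUnitary : Matrix n n 𝕜), hU, Matrix.one_mul,
    ← Matrix.mul_assoc (diagonal _), diagonal_mul_diagonal]
  congr 3
  funext i
  simp only [Function.comp_apply]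
  rw [← RCLike.ofReal_mul, Real.mul_self_sqrt (hA.eigenvalues_nonneg i)]

end Matrix.PosSemidef

private lemma aeval_unitary_conj {m : Type*} [Fintype m] [DecidableEq m]
    {U : Matrix m m ℂ} (hU : U ∈ Matrix.unitaryGroup m ℂ) (D : Matrix m m ℂ) (p : ℂ[X]) :
    aeval (U * D * star U) p = U * aeval D p * star U := by
  have hU1 : U * star U = 1 := (Matrix.mem_unitaryGroup_iff).mp hU
  have hU2 : star U * U = 1 := (Matrix.mem_unitaryGroup_iff').mp hU
  have hpow : ∀ k : ℕ, (U * D * star U) ^ k = U * D ^ k * star U := by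
    intro k
    induction k with
    | zero => simp [hU1]
    | succ k ih =>
      rw [pow_succ, pow_succ, ih]
      simp only [Matrix.mul_assoc]
      rw [← Matrix.mul_assoc (star U) U, hU2, one_mul]
  induction p using Polynomial.induction_on' with
  | add p q hp hq => simp [hp, hq, Matrix.add_mul, Matrix.mul_add]
  | monomial k a =>
    simp only [aeval_monomial, hpow, Algebra.algebraMap_eq_smul_one, smul_mul_assoc, one_mul,
      Matrix.mul_smul, Matrix.smul_mul]

private lemma aeval_diagonal' {m : Type*} [Fintype m] [DecidableEq m] (d : m → ℂ) (p : ℂ[X]) :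
    aeval (Matrix.diagonal d) p = Matrix.diagonal (fun i => aeval (d i) p) := by
  have h := aeval_algHom_apply (Matrix.diagonalAlgHom (n := m) (α := ℂ) ℂ) d p
  simp only [Matrix.diagonalAlgHom_apply] at h
  rw [h]
  rw [Matrix.diagonal_eq_diagonal_iff]
  intro i
  exact (aeval_algHom_apply (Pi.evalAlgHom ℂ (fun _ : m => ℂ) i) d p).symm

private lemma sqrt_eq_aeval {m : Type*} [Fintype m] [DecidableEq m] {M : Matrix m m ℂ}
    (hM : M.PosSemidef) (p : ℂ[X])
    (hp : ∀ i, aeval ((hM.1.eigenvalues i : ℝ) : ℂ) p = ((Real.sqrt (hM.1.eigenvalues i) : ℝ) : ℂ)) :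
    aeval M p = hM.sqrt := by
  conv_lhs => rw [hM.1.spectral_theorem, Unitary.conjStarAlgAut_apply]
  rw [aeval_unitary_conj (hM.1.eigenvectorUnitary).2, aeval_diagonal']
  rw [Matrix.PosSemidef.sqrt]
  congr 1
  congr 1
  rw [Matrix.diagonal_eq_diagonal_iff]
  intro i
  simpa using hp i

private lemma mul_aeval_comm {m : Type*} [Fintype m] [DecidableEq m]
    {A B C : Matrix m m ℂ} (h : C * A = B * C) (p : ℂ[X]) :
    C * aeval A p = aeval B p * C := by
  have hpow : ∀ k : ℕ, C * A ^ k = B ^ k * C := by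
    intro k
    induction k with
    | zero => simp
    | succ k ih => rw [pow_succ, pow_succ, ← mul_assoc, ih, mul_assoc, h, ← mul_assoc]
  induction p using Polynomial.induction_on' with
  | add p q hp hq => simp [Matrix.mul_add, Matrix.add_mul, hp, hq]
  | monomial k a =>
    simp only [aeval_monomial, Algebra.algebraMap_eq_smul_one, smul_mul_assoc, one_mul,
      Matrix.mul_smul, Matrix.smul_mul, hpow]

/-- If `1 - Cᴴ C` (hence also `1 - C Cᴴ`) is positive semidefinite, then the
block matrix `W = [[C, (1 - C Cᴴ)^{1/2}], [(1 - Cᴴ C)^{1/2}, -Cᴴ]]` is unitary: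
`Wᴴ W = 1` and `W Wᴴ = 1`. -/
theorem fromBlocks_unitary (n : ℕ) (C : Matrix (Fin n) (Fin n) ℂ)
    (h₁ : (1 - Cᴴ * C).PosSemidef) (h₂ : (1 - C * Cᴴ).PosSemidef)
    (W : Matrix (Fin n ⊕ Fin n) (Fin n ⊕ Fin n) ℂ)
    (hW : W = Matrix.fromBlocks C h₂.sqrt h₁.sqrt (-Cᴴ)) :
    Wᴴ * W = 1 ∧ W * Wᴴ = 1 := by
  -- interpolating polynomial for sqrt on the union of eigenvalues
  set s : Finset ℝ :=
    (Finset.univ.image h₁.1.eigenvalues) ∪ (Finset.univ.image h₂.1.eigenvalues) with hs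
  set q : Polynomial ℝ := Lagrange.interpolate s id Real.sqrt with hq
  set p : ℂ[X] := q.map (algebraMap ℝ ℂ) with hp
  have hinj : Set.InjOn (id : ℝ → ℝ) s := Function.injective_id.injOn
  have hval : ∀ x : ℝ, x ∈ s → aeval (x : ℂ) p = ((Real.sqrt x : ℝ) : ℂ) := by
    intro x hx
    rw [hp, aeval_map_algebraMap]
    have hx' : ((x : ℂ)) = algebraMap ℝ ℂ x := rfl
    rw [hx', aeval_algebraMap_apply_eq_algebraMap_eval]
    exact congrArg (algebraMap ℝ ℂ) (Lagrange.eval_interpolate_at_node Real.sqrt hinj hx)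
  have e₁ : aeval (1 - Cᴴ * C) p = h₁.sqrt := by
    apply sqrt_eq_aeval h₁ p
    intro i
    exact hval _ (Finset.mem_union_left _ (Finset.mem_image_of_mem _ (Finset.mem_univ i)))
  have e₂ : aeval (1 - C * Cᴴ) p = h₂.sqrt := by
    apply sqrt_eq_aeval h₂ p
    intro i
    exact hval _ (Finset.mem_union_right _ (Finset.mem_image_of_mem _ (Finset.mem_univ i)))
  have hcomm : C * (1 - Cᴴ * C) = (1 - C * Cᴴ) * C := by
    rw [Matrix.mul_sub, Matrix.sub_mul, mul_one, one_mul, mul_assoc]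
  have key : C * h₁.sqrt = h₂.sqrt * C := by
    rw [← e₁, ← e₂]; exact mul_aeval_comm hcomm p
  have h1H : h₁.sqrtᴴ = h₁.sqrt := h₁.posSemidef_sqrt.1
  have h2H : h₂.sqrtᴴ = h₂.sqrt := h₂.posSemidef_sqrt.1
  have keyT : h₁.sqrt * Cᴴ = Cᴴ * h₂.sqrt := by
    have := congrArg Matrix.conjTranspose key
    rwa [Matrix.conjTranspose_mul, Matrix.conjTranspose_mul, h1H, h2H] at this
  have sq1 : h₁.sqrt * h₁.sqrt = 1 - Cᴴ * C := h₁.sqrt_mul_self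
  have sq2 : h₂.sqrt * h₂.sqrt = 1 - C * Cᴴ := h₂.sqrt_mul_self
  subst hW
  rw [Matrix.fromBlocks_conjTranspose, h1H, h2H, Matrix.conjTranspose_neg,
    Matrix.conjTranspose_conjTranspose]
  have b1 : Cᴴ * C + h₁.sqrt * h₁.sqrt = 1 := by rw [sq1, add_sub_cancel]
  have b2 : Cᴴ * h₂.sqrt + h₁.sqrt * -Cᴴ = 0 := by
    rw [Matrix.mul_neg, keyT, add_neg_cancel]
  have b3 : h₂.sqrt * C + -C * h₁.sqrt = 0 := by
    rw [Matrix.neg_mul, key, add_neg_cancel]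
  have b4 : h₂.sqrt * h₂.sqrt + -C * -Cᴴ = 1 := by
    rw [sq2, neg_mul_neg, sub_add_cancel]
  have c1 : C * Cᴴ + h₂.sqrt * h₂.sqrt = 1 := by rw [sq2, add_sub_cancel]
  have c2 : C * h₁.sqrt + h₂.sqrt * -C = 0 := by
    rw [Matrix.mul_neg, ← key, add_neg_cancel]
  have c3 : h₁.sqrt * Cᴴ + -Cᴴ * h₂.sqrt = 0 := by
    rw [Matrix.neg_mul, ← keyT, add_neg_cancel]
  have c4 : h₁.sqrt * h₁.sqrt + -Cᴴ * -C = 1 := by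
    rw [sq1, neg_mul_neg, sub_add_cancel]
  constructor
  · rw [Matrix.fromBlocks_multiply, b1, b2, b3, b4, Matrix.fromBlocks_one]
  · rw [Matrix.fromBlocks_multiply, c1, c2, c3, c4, Matrix.fromBlocks_one]
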